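/- Let S be the alignment on X = {1,2,3,4,5} over the state set {A,C} consisting of two copies of AACCC, three copies of ACACC, three copies of AACCA, three copies of AACAC and four copies of AAACC. Then: S|_{X∖{1}} has the unique MP quartet tree ((2,3),(4,5)); S|_{X∖{2}} has the unique MP quartet tree ((1,3),(4,5)); S|_{X∖{3}} has the unique MP quartet tree ((1,2),(4,5)); S|_{X∖{4}} has the unique MP quartet tree ((1,2),(3,5)); and S|_{X∖{5}} has the unique MP quartet tree ((1,2),(3,4)). Each of these five quartet trees is compatible with the tree T̂ = ((1,2),3,(4,5)), yet T̂ is not an MP tree for S: the tree ((1,3),2,(4,5)) has strictly smaller parsimony score on S than T̂. -/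

import Mathlib

/-!
Basic definitions for Maximum Parsimony / Maximum Likelihood phylogenetics.

A *binary phylogenetic X-tree* is a finite simple graph that is a tree (connected
and acyclic) whose degree-1 vertices are exactly the (images of the) taxa in `X`,
all other vertices having degree 3.
-/

/-- The number of edges of the graph `G` on which the vertex labeling `g` changes state
(i.e. edges `{u,v}` with `g u ≠ g v`). -/
noncomputable def changedEdges {V C : Type} (G : SimpleGraph V) (g : V → C) : ℕ :=
  {e ∈ G.edgeSet | ¬ (Sym2.map g e).IsDiag}.ncard

/-- The parsimony score of a character `f : X → C` on the graph `G`, whose taxa are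
embedded via `ι : X → V`: the minimum number of change-edges over all extensions
`g : V → C` of `f`. -/
noncomputable def gScore {V X C : Type} (G : SimpleGraph V) (ι : X → V) (f : X → C) : ℕ :=
  sInf { n : ℕ | ∃ g : V → C, (∀ x, g (ι x) = f x) ∧ n = changedEdges G g }

/-- The parsimony score of an alignment (finite sequence of characters). -/
noncomputable def gScoreA {V X C : Type} (G : SimpleGraph V) (ι : X → V)
    (S : List (X → C)) : ℕ :=
  (S.map (gScore G ι)).sum

/-- A binary phylogenetic `X`-tree: a finite simple graph which is a tree (connected and
acyclic), with an injective embedding `ι` of the taxon set `X` as its vertices of degree 1,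
every vertex not in the image of `ι` having degree 3. -/
structure PhyloTree (X : Type) : Type 1 where
  V : Type
  G : SimpleGraph V
  ι : X → V
  finV : Finite V
  inj : Function.Injective ι
  conn : G.Connected
  acyc : G.IsAcyclic
  leafDeg : ∀ x : X, (G.neighborSet (ι x)).ncard = 1
  innerDeg : ∀ v : V, v ∉ Set.range ι → (G.neighborSet v).ncard = 3

namespace PhyloTree

variable {X C : Type}

/-- Parsimony score `l_T(f)` of a character on a binary phylogenetic tree. -/
noncomputable def score (T : PhyloTree X) (f : X → C) : ℕ := gScore T.G T.ι f

/-- Parsimony score `l_T(S)` of an alignment on a binary phylogenetic tree. -/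
noncomputable def scoreA (T : PhyloTree X) (S : List (X → C)) : ℕ := gScoreA T.G T.ι S

/-- The set of vertices of `T` lying on a path between two taxa of `Y`. -/
def span (T : PhyloTree X) (Y : Set X) : Set T.V :=
  {v | ∃ x ∈ Y, ∃ y ∈ Y, ∃ p : T.G.Walk (T.ι x) (T.ι y), p.IsPath ∧ v ∈ p.support}

lemma ι_mem_span (T : PhyloTree X) {Y : Set X} {y : X} (hy : y ∈ Y) : T.ι y ∈ T.span Y :=
  ⟨y, hy, y, hy, SimpleGraph.Walk.nil, SimpleGraph.Walk.IsPath.nil,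
    SimpleGraph.Walk.start_mem_support _⟩

/-- Parsimony score of the restricted character `f|_Y` on the restricted tree `T|_Y`
(the subgraph of `T` induced on the set of vertices lying on paths between taxa of `Y`). -/
noncomputable def restScore (T : PhyloTree X) (Y : Set X) (f : X → C) : ℕ :=
  gScore (T.G.induce (T.span Y)) (fun y : Y => ⟨T.ι y, T.ι_mem_span y.2⟩) (fun y : Y => f y)

/-- Parsimony score of the restricted alignment `S|_Y` on the restricted tree `T|_Y`. -/
noncomputable def restScoreA (T : PhyloTree X) (Y : Set X) (S : List (X → C)) : ℕ :=
  (S.map (T.restScore Y)).sum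

end PhyloTree

/-- The restriction `S|_Y` of an alignment to a subset `Y` of the taxa. -/
def subAl {X C : Type} (Y : Set X) (S : List (X → C)) : List (↥Y → C) :=
  S.map fun f y => f y.1

/-- Two binary phylogenetic `X`-trees are isomorphic as `X`-trees if there is a graph
isomorphism between them fixing every taxon. -/
def PhyloIso {X : Type} (T T' : PhyloTree X) : Prop :=
  ∃ e : T.G ≃g T'.G, ∀ x, e (T.ι x) = T'.ι x

/-- `T` is a maximum parsimony (MP) tree for the alignment `S`. -/
def PhyloTree.IsMP {X C : Type} (T : PhyloTree X) (S : List (X → C)) : Prop :=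
  ∀ T' : PhyloTree X, T.scoreA S ≤ T'.scoreA S

/-- `T` is the unique maximum parsimony tree for `S`: it is an MP tree and every tree not
isomorphic to it (fixing the taxa) has strictly larger parsimony score. -/
def PhyloTree.IsUniqueMP {X C : Type} (T : PhyloTree X) (S : List (X → C)) : Prop :=
  T.IsMP S ∧ ∀ T' : PhyloTree X, ¬ PhyloIso T T' → T.scoreA S < T'.scoreA S

/-- The caterpillar tree `((i,j),k,(l,m))` on five taxa: there are internal vertices
`a, c, b` with edges `{i,a},{j,a},{a,c},{k,c},{c,b},{l,b},{m,b}`. -/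
def PhyloTree.Cat5 (T : PhyloTree (Fin 5)) (i j k l m : Fin 5) : Prop :=
  ∃ a c b : T.V, T.G.Adj (T.ι i) a ∧ T.G.Adj (T.ι j) a ∧ T.G.Adj a c ∧
    T.G.Adj (T.ι k) c ∧ T.G.Adj c b ∧ T.G.Adj (T.ι l) b ∧ T.G.Adj (T.ι m) b

/-- The caterpillar tree `(((i,j),k),(l,(m,n)))` on six taxa: internal vertices `a,b,c,d`
with edges `{i,a},{j,a},{a,b},{k,b},{b,c},{l,c},{c,d},{m,d},{n,d}`. -/
def PhyloTree.Cat6 (T : PhyloTree (Fin 6)) (i j k l m n : Fin 6) : Prop :=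
  ∃ a b c d : T.V, T.G.Adj (T.ι i) a ∧ T.G.Adj (T.ι j) a ∧ T.G.Adj a b ∧
    T.G.Adj (T.ι k) b ∧ T.G.Adj b c ∧ T.G.Adj (T.ι l) c ∧ T.G.Adj c d ∧
    T.G.Adj (T.ι m) d ∧ T.G.Adj (T.ι n) d

/-- The quartet tree `((x₁,x₂),(x₃,x₄))`: internal vertices `u,v` with edges
`{x₁,u},{x₂,u},{u,v},{x₃,v},{x₄,v}`. -/
def PhyloTree.Cherries {X : Type} (T : PhyloTree X) (x₁ x₂ x₃ x₄ : X) : Prop :=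
  ∃ u v : T.V, T.G.Adj (T.ι x₁) u ∧ T.G.Adj (T.ι x₂) u ∧ T.G.Adj u v ∧
    T.G.Adj (T.ι x₃) v ∧ T.G.Adj (T.ι x₄) v

/-- The tree `T` displays the quartet split `x₁x₂ | x₃x₄`: the path from `x₁` to `x₂`
is vertex-disjoint from the path from `x₃` to `x₄`. (For a quartet tree on the four
taxa `x₁,…,x₄` this says exactly that its cherries are `{x₁,x₂}` and `{x₃,x₄}`;
for a larger tree it says that the restriction of `T` to `{x₁,x₂,x₃,x₄}`, with
degree-2 vertices suppressed, is the quartet tree `((x₁,x₂),(x₃,x₄))`.) -/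
def PhyloTree.Split {X : Type} (T : PhyloTree X) (x₁ x₂ x₃ x₄ : X) : Prop :=
  ∃ (p : T.G.Walk (T.ι x₁) (T.ι x₂)) (q : T.G.Walk (T.ι x₃) (T.ι x₄)),
    p.IsPath ∧ q.IsPath ∧ ∀ v, v ∈ p.support → v ∉ q.support

/-- A quartet tree `Q` on a four-element subset `Y ⊆ X` is compatible with the
`X`-tree `T` if the partition of `Y` into the two cherries of `Q` agrees with the
quartet split displayed by `T` on `Y`. -/
def QuartetCompat {X : Type} {Y : Set X} (Q : PhyloTree ↥Y) (T : PhyloTree X) : Prop :=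
  ∃ y₁ y₂ y₃ y₄ : ↥Y, y₁ ≠ y₂ ∧ y₁ ≠ y₃ ∧ y₁ ≠ y₄ ∧ y₂ ≠ y₃ ∧ y₂ ≠ y₄ ∧ y₃ ≠ y₄ ∧
    ({y₁, y₂, y₃, y₄} : Set ↥Y) = Set.univ ∧
    Q.Cherries y₁ y₂ y₃ y₄ ∧ T.Split y₁.1 y₂.1 y₃.1 y₄.1

/-- The binary phylogenetic `Y`-tree `Q` is (up to isomorphism) the tree `T‖_Y` obtained
from `T|_Y` by suppressing its degree-2 vertices: equivalently (binary trees being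
determined by their quartet splits), `Q` displays exactly the quartet splits of `T`
on taxa from `Y`. -/
def DisplaysRestriction {X : Type} (Y : Set X) (Q : PhyloTree ↥Y) (T : PhyloTree X) : Prop :=
  ∀ y₁ y₂ y₃ y₄ : ↥Y, (Q.Split y₁ y₂ y₃ y₄ ↔ T.Split y₁.1 y₂.1 y₃.1 y₄.1)

/-- The likelihood `P(f | G, p)` of a character `f` under the fully symmetric `N_r`-model
on the graph `G` (taxa embedded via `ι`) with substitution probabilities `p` on the edges:
`(1/r) · Σ_g Π_{e ∈ E(G)} w_e(g)`, summed over all extensions `g` of `f`, where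
`w_e(g) = p e` if `g` changes state along `e` and `w_e(g) = 1 - (r-1) p e` otherwise. -/
noncomputable def charLik {V X C : Type} [DecidableEq C] (r : ℕ) (G : SimpleGraph V)
    (ι : X → V) (f : X → C) (p : Sym2 V → ℝ) : ℝ :=
  (1 / (r : ℝ)) * ∑ᶠ g ∈ {g : V → C | ∀ x, g (ι x) = f x},
    ∏ᶠ e ∈ G.edgeSet, (if (Sym2.map g e).IsDiag then 1 - ((r : ℝ) - 1) * p e else p e)

/-- `max P(f|T)`: the supremum of the likelihood of the character `f` on the binary
phylogenetic tree `T` under the `N_r`-model, over all edge parameters `0 ≤ p e ≤ 1/r`. -/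
noncomputable def PhyloTree.maxLik {X C : Type} [DecidableEq C] (T : PhyloTree X) (r : ℕ)
    (f : X → C) : ℝ :=
  sSup { L : ℝ | ∃ p : Sym2 T.V → ℝ,
    (∀ e ∈ T.G.edgeSet, 0 ≤ p e ∧ p e ≤ 1 / (r : ℝ)) ∧ L = charLik r T.G T.ι f p }

/-- `max P(S|T)` under the `N_r`-model with *no common mechanism*: the product over the
characters of the alignment of their individually maximized likelihoods. -/
noncomputable def PhyloTree.maxLikA {X C : Type} [DecidableEq C] (T : PhyloTree X) (r : ℕ)
    (S : List (X → C)) : ℝ :=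
  (S.map (T.maxLik r)).prod

/-- `T` is a maximum likelihood (ML) tree for `S` under the `N_r`-model with no common
mechanism. -/
def PhyloTree.IsML {X C : Type} [DecidableEq C] (T : PhyloTree X) (r : ℕ)
    (S : List (X → C)) : Prop :=
  ∀ T' : PhyloTree X, T'.maxLikA r S ≤ T.maxLikA r S

/-- `T` is the unique ML tree for `S` under the `N_r`-model with no common mechanism. -/
def PhyloTree.IsUniqueML {X C : Type} [DecidableEq C] (T : PhyloTree X) (r : ℕ)
    (S : List (X → C)) : Prop :=
  T.IsML r S ∧ ∀ T' : PhyloTree X, ¬ PhyloIso T T' → T'.maxLikA r S < T.maxLikA r S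
/-- The five-taxa binary alignment of Proposition `bennyprop` (states `A = 0`, `C = 1`):
two copies of `AACCC`, three of `ACACC`, three of `AACCA`, three of `AACAC` and four of
`AAACC`. -/
def Sben : List (Fin 5 → Fin 2) :=
  List.replicate 2 ![0,0,1,1,1] ++ List.replicate 3 ![0,1,0,1,1] ++
  List.replicate 3 ![0,0,1,1,0] ++ List.replicate 3 ![0,0,1,0,1] ++
  List.replicate 4 ![0,0,0,1,1]


namespace BenAux
open SimpleGraph

variable {X : Type}

lemma mem_of_walk (T : PhyloTree X) (s : Set T.V)
    (hcl : ∀ v ∈ s, ∀ w, T.G.Adj v w → w ∈ s)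
    {v w : T.V} (p : T.G.Walk v w) (hv : v ∈ s) : w ∈ s := by
  induction p with
  | nil => exact hv
  | cons h p ih => exact ih (hcl _ hv _ h)

lemma eq_univ_of_closed (T : PhyloTree X) (s : Set T.V) (v0 : T.V) (h0 : v0 ∈ s)
    (hcl : ∀ v ∈ s, ∀ w, T.G.Adj v w → w ∈ s) (v : T.V) : v ∈ s := by
  obtain ⟨p⟩ := (T.conn.preconnected v0 v)
  exact mem_of_walk T s hcl p h0

lemma nbr_finite (T : PhyloTree X) (v : T.V) : (T.G.neighborSet v).Finite := by
  have := T.finV; exact Set.toFinite _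

lemma nbhd_eq (T : PhyloTree X) (v : T.V) (t : Set T.V) (hsub : t ⊆ T.G.neighborSet v)
    (hn : (T.G.neighborSet v).ncard ≤ t.ncard) : T.G.neighborSet v = t :=
  (Set.eq_of_subset_of_ncard_le hsub hn (nbr_finite T v)).symm

lemma leaf_nbhd (T : PhyloTree X) (x : X) (u : T.V) (h : T.G.Adj (T.ι x) u) :
    T.G.neighborSet (T.ι x) = {u} := by
  apply nbhd_eq
  · intro y hy
    rcases hy with rfl
    exact h
  · rw [T.leafDeg x, Set.ncard_singleton]

lemma not_leaf (T : PhyloTree X) (v a b : T.V) (hab : a ≠ b)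
    (ha : T.G.Adj v a) (hb : T.G.Adj v b) : v ∉ Set.range T.ι := by
  rintro ⟨x, rfl⟩
  have h1 := T.leafDeg x
  have h2 : ({a, b} : Set T.V).ncard ≤ (T.G.neighborSet (T.ι x)).ncard := by
    apply Set.ncard_le_ncard _ (nbr_finite T _)
    rintro y (rfl | rfl)
    · exact ha
    · exact hb
  rw [Set.ncard_pair hab, h1] at h2
  omega

lemma internal_nbhd (T : PhyloTree X) (v a b c : T.V) (hab : a ≠ b) (hac : a ≠ c)
    (hbc : b ≠ c) (ha : T.G.Adj v a) (hb : T.G.Adj v b) (hc : T.G.Adj v c) :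
    T.G.neighborSet v = {a, b, c} := by
  apply nbhd_eq
  · rintro y (rfl | rfl | rfl) <;> assumption
  · rw [T.innerDeg v (not_leaf T v a b hab ha hb)]
    rw [Set.ncard_insert_of_notMem (by simp [hab, hac]), Set.ncard_pair hbc]

lemma ncard_sep_finset {α : Type} (F : Finset α) (P : α → Prop) [DecidablePred P] :
    {e ∈ (↑F : Set α) | P e}.ncard = (F.filter P).card := by
  rw [← Set.ncard_coe_finset]
  congr 1
  ext e
  simp

lemma leaf_nbr_internal (T : PhyloTree X) (a b c : X) (hab : a ≠ b) (hac : a ≠ c)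
    (hbc : b ≠ c) (x : X) (w : T.V) (h : T.G.Adj (T.ι x) w) : w ∉ Set.range T.ι := by
  rintro ⟨z, rfl⟩
  have hx : T.G.neighborSet (T.ι x) = {T.ι z} := leaf_nbhd T x _ h
  have hz : T.G.neighborSet (T.ι z) = {T.ι x} := leaf_nbhd T z _ h.symm
  have hcl : ∀ p ∈ ({T.ι x, T.ι z} : Set T.V), ∀ q, T.G.Adj p q →
      q ∈ ({T.ι x, T.ι z} : Set T.V) := by
    rintro p (rfl | rfl) q hq
    · have : q ∈ T.G.neighborSet (T.ι x) := hq
      rw [hx] at this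
      right; exact this
    · have : q ∈ T.G.neighborSet (T.ι z) := hq
      rw [hz] at this
      left; exact this
  have huniv := fun v => eq_univ_of_closed T _ _ (Set.mem_insert _ _) hcl v
  have ha := huniv (T.ι a)
  have hb := huniv (T.ι b)
  have hc := huniv (T.ι c)
  simp only [Set.mem_insert_iff, Set.mem_singleton_iff] at ha hb hc
  rcases ha with ha | ha <;> rcases hb with hb | hb <;> rcases hc with hc | hc <;>
    first
      | exact hab (T.inj (ha.trans hb.symm))
      | exact hac (T.inj (ha.trans hc.symm))
      | exact hbc (T.inj (hb.trans hc.symm))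

end BenAux
namespace BenAux
open SimpleGraph

/-- Count of change-edges on the quartet tree `((x1,x2),(x3,x4))` when the leaves get
states `a b c d` and the internal vertices get states `s t`. -/
def qcnt (a b c d s t : Fin 2) : ℕ :=
  (if a = s then 0 else 1) + ((if b = s then 0 else 1) + ((if s = t then 0 else 1) +
    ((if c = t then 0 else 1) + (if d = t then 0 else 1))))

/-- Parsimony score on the quartet tree `((x1,x2),(x3,x4))` with leaf states `a b c d`. -/
def qsc (a b c d : Fin 2) : ℕ :=
  min (min (qcnt a b c d 0 0) (qcnt a b c d 0 1)) (min (qcnt a b c d 1 0) (qcnt a b c d 1 1))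

lemma qsc_le (a b c d s t : Fin 2) : qsc a b c d ≤ qcnt a b c d s t := by
  revert a b c d s t; decide

/-- Data of a quartet tree with cherries `{x1,x2}` and `{x3,x4}`. -/
structure QData {X : Type} (T : PhyloTree X) (x1 x2 x3 x4 : X) where
  u : T.V
  v : T.V
  h1 : T.G.Adj (T.ι x1) u
  h2 : T.G.Adj (T.ι x2) u
  huv : T.G.Adj u v
  h3 : T.G.Adj (T.ι x3) v
  h4 : T.G.Adj (T.ι x4) v
  hx12 : x1 ≠ x2
  hx13 : x1 ≠ x3
  hx14 : x1 ≠ x4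
  hx23 : x2 ≠ x3
  hx24 : x2 ≠ x4
  hx34 : x3 ≠ x4
  hall : ∀ x, x = x1 ∨ x = x2 ∨ x = x3 ∨ x = x4

namespace QData

variable {X : Type} {T : PhyloTree X} {x1 x2 x3 x4 : X} (D : QData T x1 x2 x3 x4)

lemma u_not_leaf : D.u ∉ Set.range T.ι :=
  not_leaf T D.u _ _ (fun h => D.hx12 (T.inj h)) D.h1.symm D.h2.symm

lemma v_not_leaf : D.v ∉ Set.range T.ι :=
  not_leaf T D.v _ _ (fun h => D.hx34 (T.inj h)) D.h3.symm D.h4.symm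

lemma ι_ne_u (x : X) : T.ι x ≠ D.u := fun h => D.u_not_leaf ⟨x, h⟩
lemma ι_ne_v (x : X) : T.ι x ≠ D.v := fun h => D.v_not_leaf ⟨x, h⟩
lemma u_ne_ι (x : X) : D.u ≠ T.ι x := (D.ι_ne_u x).symm
lemma v_ne_ι (x : X) : D.v ≠ T.ι x := (D.ι_ne_v x).symm
lemma u_ne_v : D.u ≠ D.v := D.huv.ne
lemma v_ne_u : D.v ≠ D.u := D.huv.ne'

lemma nbhd_u : T.G.neighborSet D.u = {T.ι x1, T.ι x2, D.v} :=
  internal_nbhd T D.u _ _ _ (fun h => D.hx12 (T.inj h)) (D.ι_ne_v x1) (D.ι_ne_v x2)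
    D.h1.symm D.h2.symm D.huv

lemma nbhd_v : T.G.neighborSet D.v = {T.ι x3, T.ι x4, D.u} :=
  internal_nbhd T D.v _ _ _ (fun h => D.hx34 (T.inj h)) (D.ι_ne_u x3) (D.ι_ne_u x4)
    D.h3.symm D.h4.symm D.huv.symm

lemma enum (w : T.V) : w = T.ι x1 ∨ w = T.ι x2 ∨ w = T.ι x3 ∨ w = T.ι x4 ∨
    w = D.u ∨ w = D.v := by
  have hcl : ∀ p ∈ ({T.ι x1, T.ι x2, T.ι x3, T.ι x4, D.u, D.v} : Set T.V), ∀ q,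
      T.G.Adj p q → q ∈ ({T.ι x1, T.ι x2, T.ι x3, T.ι x4, D.u, D.v} : Set T.V) := by
    rintro p (rfl | rfl | rfl | rfl | rfl | rfl) q hq
    · have : q ∈ T.G.neighborSet (T.ι x1) := hq
      rw [leaf_nbhd T x1 D.u D.h1] at this
      rcases this with rfl
      simp
    · have : q ∈ T.G.neighborSet (T.ι x2) := hq
      rw [leaf_nbhd T x2 D.u D.h2] at this
      rcases this with rfl
      simp
    · have : q ∈ T.G.neighborSet (T.ι x3) := hq
      rw [leaf_nbhd T x3 D.v D.h3] at this
      rcases this with rfl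
      simp
    · have : q ∈ T.G.neighborSet (T.ι x4) := hq
      rw [leaf_nbhd T x4 D.v D.h4] at this
      rcases this with rfl
      simp
    · have : q ∈ T.G.neighborSet D.u := hq
      rw [D.nbhd_u] at this
      rcases this with rfl | rfl | rfl <;> simp
    · have : q ∈ T.G.neighborSet D.v := hq
      rw [D.nbhd_v] at this
      rcases this with rfl | rfl | rfl <;> simp
  have := eq_univ_of_closed T _ _ (Set.mem_insert _ _) hcl w
  simpa using this

lemma edge_enum : T.G.edgeSet = {s(T.ι x1, D.u), s(T.ι x2, D.u), s(D.u, D.v),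
    s(T.ι x3, D.v), s(T.ι x4, D.v)} := by
  ext e
  induction e with
  | h a b =>
    constructor
    · intro he
      have hab : T.G.Adj a b := he
      have hbn : b ∈ T.G.neighborSet a := hab
      rcases D.enum a with rfl | rfl | rfl | rfl | rfl | rfl
      · rw [leaf_nbhd T x1 D.u D.h1] at hbn
        rcases hbn with rfl
        simp
      · rw [leaf_nbhd T x2 D.u D.h2] at hbn
        rcases hbn with rfl
        simp
      · rw [leaf_nbhd T x3 D.v D.h3] at hbn
        rcases hbn with rfl
        simp [Sym2.eq_iff]
      · rw [leaf_nbhd T x4 D.v D.h4] at hbn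
        rcases hbn with rfl
        simp [Sym2.eq_iff]
      · rw [D.nbhd_u] at hbn
        rcases hbn with rfl | rfl | rfl <;> simp [Sym2.eq_iff]
      · rw [D.nbhd_v] at hbn
        rcases hbn with rfl | rfl | rfl <;> simp [Sym2.eq_iff]
    · intro he
      simp only [Set.mem_insert_iff, Set.mem_singleton_iff, Sym2.eq_iff] at he
      rcases he with (⟨rfl, rfl⟩ | ⟨rfl, rfl⟩) | (⟨rfl, rfl⟩ | ⟨rfl, rfl⟩) |
        (⟨rfl, rfl⟩ | ⟨rfl, rfl⟩) | (⟨rfl, rfl⟩ | ⟨rfl, rfl⟩) | (⟨rfl, rfl⟩ | ⟨rfl, rfl⟩) <;>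
        first
          | exact D.h1 | exact D.h1.symm | exact D.h2 | exact D.h2.symm
          | exact D.huv | exact D.huv.symm | exact D.h3 | exact D.h3.symm
          | exact D.h4 | exact D.h4.symm

lemma changed (g : T.V → Fin 2) :
    changedEdges T.G g = qcnt (g (T.ι x1)) (g (T.ι x2)) (g (T.ι x3)) (g (T.ι x4))
      (g D.u) (g D.v) := by
  classical
  have e1u := D.ι_ne_u x1
  have e2u := D.ι_ne_u x2
  have e3u := D.ι_ne_u x3
  have e4u := D.ι_ne_u x4
  have e1v := D.ι_ne_v x1
  have e2v := D.ι_ne_v x2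
  have e3v := D.ι_ne_v x3
  have e4v := D.ι_ne_v x4
  have euv := D.u_ne_v
  have e12 : T.ι x1 ≠ T.ι x2 := fun h => D.hx12 (T.inj h)
  have e13 : T.ι x1 ≠ T.ι x3 := fun h => D.hx13 (T.inj h)
  have e14 : T.ι x1 ≠ T.ι x4 := fun h => D.hx14 (T.inj h)
  have e23 : T.ι x2 ≠ T.ι x3 := fun h => D.hx23 (T.inj h)
  have e24 : T.ι x2 ≠ T.ι x4 := fun h => D.hx24 (T.inj h)
  have e34 : T.ι x3 ≠ T.ι x4 := fun h => D.hx34 (T.inj h)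
  have hE : T.G.edgeSet = (↑({s(T.ι x1, D.u), s(T.ι x2, D.u), s(D.u, D.v),
      s(T.ι x3, D.v), s(T.ι x4, D.v)} : Finset (Sym2 T.V)) : Set (Sym2 T.V)) := by
    rw [D.edge_enum]; simp
  unfold changedEdges
  rw [hE, ncard_sep_finset, Finset.card_filter]
  rw [Finset.sum_insert (by simp [Sym2.eq_iff, e12, e1u, e1v, euv, e13, e14]),
    Finset.sum_insert (by simp [Sym2.eq_iff, e2u, e2v, euv, e23, e24]),
    Finset.sum_insert (by simp [Sym2.eq_iff, euv, D.u_ne_ι x3, D.u_ne_ι x4, D.v_ne_ι x3,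
      D.v_ne_ι x4]),
    Finset.sum_insert (by simp [Sym2.eq_iff, e34, e3v]),
    Finset.sum_singleton]
  simp [qcnt, Sym2.map_pair_eq, Sym2.mk_isDiag_iff, ite_not]

include D in
lemma score (f : X → Fin 2) :
    T.score f = qsc (f x1) (f x2) (f x3) (f x4) := by
  classical
  have e21 : T.ι x2 ≠ T.ι x1 := fun h => D.hx12 (T.inj h).symm
  have e31 : T.ι x3 ≠ T.ι x1 := fun h => D.hx13 (T.inj h).symm
  have e32 : T.ι x3 ≠ T.ι x2 := fun h => D.hx23 (T.inj h).symm
  have e41 : T.ι x4 ≠ T.ι x1 := fun h => D.hx14 (T.inj h).symm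
  have e42 : T.ι x4 ≠ T.ι x2 := fun h => D.hx24 (T.inj h).symm
  have e43 : T.ι x4 ≠ T.ι x3 := fun h => D.hx34 (T.inj h).symm
  have hg : ∀ s t : Fin 2, ∃ g : T.V → Fin 2, (∀ x, g (T.ι x) = f x) ∧ g D.u = s ∧
      g D.v = t := by
    intro s t
    refine ⟨fun w => if w = D.u then s else if w = D.v then t else if w = T.ι x1 then f x1
      else if w = T.ι x2 then f x2 else if w = T.ι x3 then f x3 else f x4, ?_, ?_, ?_⟩
    · intro x
      rcases D.hall x with rfl | rfl | rfl | rfl <;>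
        simp [D.ι_ne_u, D.ι_ne_v, e21, e31, e32, e41, e42, e43]
    · simp
    · simp [D.v_ne_u]
  have key : ∀ g : T.V → Fin 2, (∀ x, g (T.ι x) = f x) →
      changedEdges T.G g = qcnt (f x1) (f x2) (f x3) (f x4) (g D.u) (g D.v) := by
    intro g hgx
    rw [D.changed g, hgx x1, hgx x2, hgx x3, hgx x4]
  show gScore T.G T.ι f = _
  unfold gScore
  apply le_antisymm
  · have hle : ∀ s t : Fin 2, sInf {n | ∃ g : T.V → Fin 2, (∀ x, g (T.ι x) = f x) ∧
        n = changedEdges T.G g} ≤ qcnt (f x1) (f x2) (f x3) (f x4) s t := by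
      intro s t
      obtain ⟨g, hgx, hu, hv⟩ := hg s t
      apply Nat.sInf_le
      exact ⟨g, hgx, by rw [key g hgx, hu, hv]⟩
    exact le_min (le_min (hle 0 0) (hle 0 1)) (le_min (hle 1 0) (hle 1 1))
  · apply le_csInf
    · obtain ⟨g, hgx, -, -⟩ := hg 0 0
      exact ⟨changedEdges T.G g, g, hgx, rfl⟩
    · rintro n ⟨g, hgx, rfl⟩
      rw [key g hgx]
      exact qsc_le _ _ _ _ _ _

include D in
lemma scoreA (S : List (X → Fin 2)) :
    T.scoreA S = (S.map (fun f => qsc (f x1) (f x2) (f x3) (f x4))).sum := by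
  show (S.map (gScore T.G T.ι)).sum = _
  congr 1
  exact List.map_congr_left (fun f _ => D.score f)

end QData
end BenAux
namespace BenAux
open SimpleGraph

variable {Y : Type}

lemma deg_eq_ncard (T : PhyloTree Y) [Fintype T.V] [DecidableRel T.G.Adj] (w : T.V) :
    T.G.degree w = (T.G.neighborSet w).ncard := by
  rw [Set.ncard_eq_toFinset_card']
  congr 1

lemma assemble (T : PhyloTree Y) (y1 y2 y3 y4 : Y)
    (h12 : y1 ≠ y2) (h13 : y1 ≠ y3) (h14 : y1 ≠ y4) (h23 : y2 ≠ y3) (h24 : y2 ≠ y4)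
    (h34 : y3 ≠ y4) (hall : ∀ y, y = y1 ∨ y = y2 ∨ y = y3 ∨ y = y4)
    (u' v' : T.V) (z : Y) (hz : z ≠ y1)
    (hy1 : T.G.Adj (T.ι y1) u') (hz' : T.G.Adj (T.ι z) u') (huv : T.G.Adj u' v')
    (hrest : ∀ t, t ≠ y1 → t ≠ z → T.G.Adj (T.ι t) v') :
    Nonempty (QData T y1 y2 y3 y4) ∨ Nonempty (QData T y1 y3 y2 y4) ∨
      Nonempty (QData T y1 y4 y2 y3) := by
  rcases hall z with rfl | rfl | rfl | rfl
  · exact absurd rfl hz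
  · exact Or.inl ⟨⟨u', v', hy1, hz', huv, hrest y3 h13.symm h23.symm,
      hrest y4 h14.symm h24.symm, h12, h13, h14, h23, h24, h34, hall⟩⟩
  · refine Or.inr (Or.inl ⟨⟨u', v', hy1, hz', huv, hrest y2 h12.symm h23,
      hrest y4 h14.symm h34.symm, h13, h12, h14, h23.symm, h34, h24, ?_⟩⟩)
    intro y; rcases hall y with rfl | rfl | rfl | rfl <;> tauto
  · refine Or.inr (Or.inr ⟨⟨u', v', hy1, hz', huv, hrest y2 h12.symm h24,
      hrest y3 h13.symm h34, h14, h12, h13, h24.symm, h34.symm, h23, ?_⟩⟩)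
    intro y; rcases hall y with rfl | rfl | rfl | rfl <;> tauto

lemma classify (T : PhyloTree Y) (y1 y2 y3 y4 : Y)
    (h12 : y1 ≠ y2) (h13 : y1 ≠ y3) (h14 : y1 ≠ y4) (h23 : y2 ≠ y3) (h24 : y2 ≠ y4)
    (h34 : y3 ≠ y4) (hall : ∀ y, y = y1 ∨ y = y2 ∨ y = y3 ∨ y = y4) :
    Nonempty (QData T y1 y2 y3 y4) ∨ Nonempty (QData T y1 y3 y2 y4) ∨
      Nonempty (QData T y1 y4 y2 y3) := by
  classical
  have := T.finV
  have : Fintype T.V := Fintype.ofFinite _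
  have e12 : T.ι y1 ≠ T.ι y2 := fun h => h12 (T.inj h)
  have e13 : T.ι y1 ≠ T.ι y3 := fun h => h13 (T.inj h)
  have e14 : T.ι y1 ≠ T.ι y4 := fun h => h14 (T.inj h)
  have e23 : T.ι y2 ≠ T.ι y3 := fun h => h23 (T.inj h)
  have e24 : T.ι y2 ≠ T.ι y4 := fun h => h24 (T.inj h)
  have e34 : T.ι y3 ≠ T.ι y4 := fun h => h34 (T.inj h)
  set A : Finset T.V := {T.ι y1, T.ι y2, T.ι y3, T.ι y4} with hA
  have hAcard : A.card = 4 := by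
    rw [hA, Finset.card_insert_of_notMem (by simp [e12, e13, e14]),
      Finset.card_insert_of_notMem (by simp [e23, e24]),
      Finset.card_insert_of_notMem (by simp [e34]), Finset.card_singleton]
  have hrange : ∀ w, w ∈ A ↔ w ∈ Set.range T.ι := by
    intro w
    constructor
    · intro hw
      rw [hA] at hw
      simp only [Finset.mem_insert, Finset.mem_singleton] at hw
      rcases hw with rfl | rfl | rfl | rfl
      exacts [⟨y1, rfl⟩, ⟨y2, rfl⟩, ⟨y3, rfl⟩, ⟨y4, rfl⟩]
    · rintro ⟨z, rfl⟩
      rcases hall z with rfl | rfl | rfl | rfl <;> simp [hA]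
  -- counting
  have htree : T.G.IsTree := ⟨T.conn, T.acyc⟩
  have hedge := htree.card_edgeFinset
  have hsum := T.G.sum_degrees_eq_twice_card_edges
  rw [← Finset.sum_compl_add_sum A] at hsum
  have hsA : ∑ w ∈ A, T.G.degree w = 4 := by
    rw [Finset.sum_congr rfl (fun w hw => ?_), Finset.sum_const, hAcard, smul_eq_mul,
      mul_one]
    obtain ⟨z, hz⟩ := (hrange w).mp hw
    rw [deg_eq_ncard, ← hz, T.leafDeg z]
  have hsC : ∑ w ∈ Aᶜ, T.G.degree w = 3 * Aᶜ.card := by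
    rw [Finset.sum_congr rfl (fun w hw => ?_), Finset.sum_const, smul_eq_mul, mul_comm]
    have hw' : w ∉ Set.range T.ι := fun h => (Finset.mem_compl.mp hw) ((hrange w).mpr h)
    rw [deg_eq_ncard, T.innerDeg w hw']
  have hcompl : Aᶜ.card = Fintype.card T.V - 4 := by rw [Finset.card_compl, hAcard]
  have hle : 4 ≤ Fintype.card T.V := hAcard ▸ Finset.card_le_univ A
  have hC2 : Aᶜ.card = 2 := by
    rw [hsA, hsC, hcompl] at hsum
    omega
  obtain ⟨u, w, huw_ne, hAc⟩ := Finset.card_eq_two.mp hC2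
  have hint : ∀ p : T.V, p ∉ Set.range T.ι → p = u ∨ p = w := by
    intro p hp
    have : p ∈ Aᶜ := Finset.mem_compl.mpr (fun h => hp ((hrange p).mp h))
    rw [hAc] at this
    simpa using this
  have hu_nr : u ∉ Set.range T.ι := by
    intro h
    have : u ∈ Aᶜ := by rw [hAc]; simp
    exact (Finset.mem_compl.mp this) ((hrange u).mpr h)
  have hw_nr : w ∉ Set.range T.ι := by
    intro h
    have : w ∈ Aᶜ := by rw [hAc]; simp
    exact (Finset.mem_compl.mp this) ((hrange w).mpr h)
  have hcard6 : Fintype.card T.V = 6 := by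
    rw [hsA, hsC, hcompl] at hsum
    omega
  -- every leaf has an internal neighbor
  have hnbr : ∀ z : Y, ∃ p, T.G.Adj (T.ι z) p ∧ (p = u ∨ p = w) := by
    intro z
    have h1 := T.leafDeg z
    obtain ⟨p, hp⟩ := Set.nonempty_of_ncard_ne_zero (by rw [h1]; omega)
    have hadj : T.G.Adj (T.ι z) p := hp
    exact ⟨p, hadj, hint p (leaf_nbr_internal T y1 y2 y3 h12 h13 h23 z p hadj)⟩
  -- u and w are adjacent
  have huw : T.G.Adj u w := by
    by_contra hnot
    have hclosed : ∀ p ∈ insert u (T.G.neighborSet u), ∀ q, T.G.Adj p q →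
        q ∈ insert u (T.G.neighborSet u) := by
      rintro p hp q hq
      rcases hp with rfl | hp
      · exact Set.mem_insert_of_mem _ hq
      · have hpu : T.G.Adj u p := hp
        have hpW : p ≠ w := fun h => hnot (h ▸ hpu)
        have hpr : p ∈ Set.range T.ι := by
          by_contra hc
          rcases hint p hc with rfl | rfl
          · exact hpu.ne rfl
          · exact hpW rfl
        obtain ⟨z, rfl⟩ := hpr
        have : q ∈ T.G.neighborSet (T.ι z) := hq
        rw [leaf_nbhd T z u hpu.symm] at this
        rcases this with rfl
        exact Set.mem_insert _ _
    have hwmem := eq_univ_of_closed T _ u (Set.mem_insert _ _) hclosed w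
    rcases hwmem with h | h
    · exact huw_ne h.symm
    · exact hnot h
  -- the two leaf-neighbors of u
  have hndu : (T.G.neighborSet u).ncard = 3 := T.innerDeg u hu_nr
  have hndw : (T.G.neighborSet w).ncard = 3 := T.innerDeg w hw_nr
  have hmemw : w ∈ T.G.neighborSet u := huw
  have hmemu : u ∈ T.G.neighborSet w := huw.symm
  have hdiffu : ((T.G.neighborSet u) \ {w}).ncard = 2 := by
    rw [Set.ncard_diff_singleton_of_mem hmemw, hndu]
  have hdiffw : ((T.G.neighborSet w) \ {u}).ncard = 2 := by
    rw [Set.ncard_diff_singleton_of_mem hmemu, hndw]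
  obtain ⟨p, q, hpq, hpqset⟩ := Set.ncard_eq_two.mp hdiffu
  obtain ⟨p', q', hpq', hpqset'⟩ := Set.ncard_eq_two.mp hdiffw
  have hpmem : p ∈ T.G.neighborSet u \ {w} := by rw [hpqset]; simp
  have hqmem : q ∈ T.G.neighborSet u \ {w} := by rw [hpqset]; simp
  have hpmem' : p' ∈ T.G.neighborSet w \ {u} := by rw [hpqset']; simp
  have hqmem' : q' ∈ T.G.neighborSet w \ {u} := by rw [hpqset']; simp
  have leafy : ∀ r : T.V, r ∈ T.G.neighborSet u \ {w} → ∃ z : Y, T.ι z = r := by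
    rintro r ⟨hr1, hr2⟩
    have hadj : T.G.Adj u r := hr1
    by_contra hcon
    push_neg at hcon
    rcases hint r (fun hmem => by obtain ⟨z, hz⟩ := hmem; exact hcon z hz) with h | h
    · exact hadj.ne' h
    · exact hr2 (by simp [h])
  have leafy' : ∀ r : T.V, r ∈ T.G.neighborSet w \ {u} → ∃ z : Y, T.ι z = r := by
    rintro r ⟨hr1, hr2⟩
    have hadj : T.G.Adj w r := hr1
    by_contra hcon
    push_neg at hcon
    rcases hint r (fun hmem => by obtain ⟨z, hz⟩ := hmem; exact hcon z hz) with h | h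
    · exact hr2 (by simp [h])
    · exact hadj.ne' h
  obtain ⟨a, ha⟩ := leafy p hpmem
  obtain ⟨b, hb⟩ := leafy q hqmem
  obtain ⟨c, hc⟩ := leafy' p' hpmem'
  obtain ⟨d, hd⟩ := leafy' q' hqmem'
  have hau : T.G.Adj (T.ι a) u := by
    have := hpmem.1; rw [← ha] at this; exact ((T.G.adj_comm u (T.ι a)).mp this)
  have hbu : T.G.Adj (T.ι b) u := by
    have := hqmem.1; rw [← hb] at this; exact ((T.G.adj_comm u (T.ι b)).mp this)
  have hcw : T.G.Adj (T.ι c) w := by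
    have := hpmem'.1; rw [← hc] at this; exact ((T.G.adj_comm w (T.ι c)).mp this)
  have hdw : T.G.Adj (T.ι d) w := by
    have := hqmem'.1; rw [← hd] at this; exact ((T.G.adj_comm w (T.ι d)).mp this)
  -- a leaf adjacent to u is a or b; adjacent to w is c or d
  have hnbu : T.G.neighborSet u = {T.ι a, T.ι b, w} := by
    apply internal_nbhd T u _ _ _ _ _ _ hau.symm hbu.symm huw
    · rw [ha, hb]; exact hpq
    · rw [ha]; exact hpmem.2
    · rw [hb]; exact hqmem.2
  have hnbw : T.G.neighborSet w = {T.ι c, T.ι d, u} := by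
    apply internal_nbhd T w _ _ _ _ _ _ hcw.symm hdw.symm huw.symm
    · rw [hc, hd]; exact hpq'
    · rw [hc]; exact hpmem'.2
    · rw [hd]; exact hqmem'.2
  -- no leaf is adjacent to both u and w
  have hsep : ∀ z : Y, T.G.Adj (T.ι z) u → T.G.Adj (T.ι z) w → False := by
    intro z h1 h2
    have := leaf_nbhd T z u h1
    have h2' : w ∈ T.G.neighborSet (T.ι z) := h2
    rw [this] at h2'
    rcases h2' with rfl
    exact huw_ne rfl
  -- every taxon is attached to u (then equals a or b) or to w (then equals c or d)
  have hattach : ∀ z : Y, (T.G.Adj (T.ι z) u ∧ (z = a ∨ z = b)) ∨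
      (T.G.Adj (T.ι z) w ∧ (z = c ∨ z = d)) := by
    intro z
    obtain ⟨r, hr, hrw⟩ := hnbr z
    rcases hrw with h | h
    · left
      rw [h] at hr
      refine ⟨hr, ?_⟩
      have hmem : T.ι z ∈ T.G.neighborSet u := hr.symm
      rw [hnbu] at hmem
      rcases hmem with h' | h' | h'
      · exact Or.inl (T.inj h')
      · exact Or.inr (T.inj h')
      · exact absurd ⟨z, h'⟩ hw_nr
    · right
      rw [h] at hr
      refine ⟨hr, ?_⟩
      have hmem : T.ι z ∈ T.G.neighborSet w := hr.symm
      rw [hnbw] at hmem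
      rcases hmem with h' | h' | h'
      · exact Or.inl (T.inj h')
      · exact Or.inr (T.inj h')
      · exact absurd ⟨z, h'⟩ hu_nr
  -- case on where y1 lives
  rcases hattach y1 with ⟨h1u, h1ab⟩ | ⟨h1w, h1cd⟩
  · -- y1 at u; partner is the other of a, b
    have hab : a ≠ b := fun h => hpq (by rw [← ha, ← hb, h])
    obtain ⟨z, hzy, hz1u, hrest⟩ : ∃ z, z ≠ y1 ∧ T.G.Adj (T.ι z) u ∧
        ∀ t, t ≠ y1 → t ≠ z → T.G.Adj (T.ι t) w := by
      rcases h1ab with rfl | rfl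
      · refine ⟨b, fun h => hab h.symm, hbu, ?_⟩
        intro t ht1 htb
        rcases hattach t with ⟨htu, hta | htb'⟩ | ⟨htw, -⟩
        · exact absurd hta ht1
        · exact absurd htb' htb
        · exact htw
      · refine ⟨a, hab, hau, ?_⟩
        intro t ht1 hta
        rcases hattach t with ⟨htu, hta' | htb⟩ | ⟨htw, -⟩
        · exact absurd hta' hta
        · exact absurd htb ht1
        · exact htw
    exact assemble T y1 y2 y3 y4 h12 h13 h14 h23 h24 h34 hall u w z hzy h1u hz1u huw hrest
  · -- y1 at w; partner is the other of c, d
    have hcd : c ≠ d := fun h => hpq' (by rw [← hc, ← hd, h])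
    obtain ⟨z, hzy, hz1w, hrest⟩ : ∃ z, z ≠ y1 ∧ T.G.Adj (T.ι z) w ∧
        ∀ t, t ≠ y1 → t ≠ z → T.G.Adj (T.ι t) u := by
      rcases h1cd with rfl | rfl
      · refine ⟨d, fun h => hcd h.symm, hdw, ?_⟩
        intro t ht1 htd
        rcases hattach t with ⟨htu, -⟩ | ⟨htw, htc | htd'⟩
        · exact htu
        · exact absurd htc ht1
        · exact absurd htd' htd
      · refine ⟨c, hcd, hcw, ?_⟩
        intro t ht1 htc
        rcases hattach t with ⟨htu, -⟩ | ⟨htw, htc' | htd⟩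
        · exact htu
        · exact absurd htc' htc
        · exact absurd htd ht1
    exact assemble T y1 y2 y3 y4 h12 h13 h14 h23 h24 h34 hall w u z hzy h1w hz1w huw.symm
      hrest

end BenAux
namespace BenAux
open SimpleGraph

/-- A six-point case map. -/
noncomputable def pt6 {α β : Type} (a1 a2 a3 a4 a5 : α) (b1 b2 b3 b4 b5 b6 : β) : α → β :=
  letI := Classical.decEq α
  fun w => if w = a1 then b1 else if w = a2 then b2 else if w = a3 then b3
    else if w = a4 then b4 else if w = a5 then b5 else b6

section Pt6
variable {α β : Type} (a1 a2 a3 a4 a5 : α) (b1 b2 b3 b4 b5 b6 : β)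

lemma pt6_1 : pt6 a1 a2 a3 a4 a5 b1 b2 b3 b4 b5 b6 a1 = b1 := by simp [pt6]
lemma pt6_2 (h : a2 ≠ a1) : pt6 a1 a2 a3 a4 a5 b1 b2 b3 b4 b5 b6 a2 = b2 := by
  simp [pt6, h]
lemma pt6_3 (h1 : a3 ≠ a1) (h2 : a3 ≠ a2) :
    pt6 a1 a2 a3 a4 a5 b1 b2 b3 b4 b5 b6 a3 = b3 := by simp [pt6, h1, h2]
lemma pt6_4 (h1 : a4 ≠ a1) (h2 : a4 ≠ a2) (h3 : a4 ≠ a3) :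
    pt6 a1 a2 a3 a4 a5 b1 b2 b3 b4 b5 b6 a4 = b4 := by simp [pt6, h1, h2, h3]
lemma pt6_5 (h1 : a5 ≠ a1) (h2 : a5 ≠ a2) (h3 : a5 ≠ a3) (h4 : a5 ≠ a4) :
    pt6 a1 a2 a3 a4 a5 b1 b2 b3 b4 b5 b6 a5 = b5 := by simp [pt6, h1, h2, h3, h4]
lemma pt6_6 (w : α) (h1 : w ≠ a1) (h2 : w ≠ a2) (h3 : w ≠ a3) (h4 : w ≠ a4)
    (h5 : w ≠ a5) : pt6 a1 a2 a3 a4 a5 b1 b2 b3 b4 b5 b6 w = b6 := by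
  simp [pt6, h1, h2, h3, h4, h5]

end Pt6

namespace QData

variable {X : Type} {T : PhyloTree X} {x1 x2 x3 x4 : X} (D : QData T x1 x2 x3 x4)

lemma adj_ι1_iff (t : T.V) : T.G.Adj (T.ι x1) t ↔ t = D.u := by
  rw [← SimpleGraph.mem_neighborSet, leaf_nbhd T x1 D.u D.h1, Set.mem_singleton_iff]
lemma adj_ι2_iff (t : T.V) : T.G.Adj (T.ι x2) t ↔ t = D.u := by
  rw [← SimpleGraph.mem_neighborSet, leaf_nbhd T x2 D.u D.h2, Set.mem_singleton_iff]
lemma adj_ι3_iff (t : T.V) : T.G.Adj (T.ι x3) t ↔ t = D.v := by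
  rw [← SimpleGraph.mem_neighborSet, leaf_nbhd T x3 D.v D.h3, Set.mem_singleton_iff]
lemma adj_ι4_iff (t : T.V) : T.G.Adj (T.ι x4) t ↔ t = D.v := by
  rw [← SimpleGraph.mem_neighborSet, leaf_nbhd T x4 D.v D.h4, Set.mem_singleton_iff]
lemma adj_u_iff (t : T.V) : T.G.Adj D.u t ↔ t = T.ι x1 ∨ t = T.ι x2 ∨ t = D.v := by
  rw [← SimpleGraph.mem_neighborSet, D.nbhd_u]
  simp
lemma adj_v_iff (t : T.V) : T.G.Adj D.v t ↔ t = T.ι x3 ∨ t = T.ι x4 ∨ t = D.u := by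
  rw [← SimpleGraph.mem_neighborSet, D.nbhd_v]
  simp

end QData

lemma iso_of_qdata {X : Type} {T T' : PhyloTree X} {x1 x2 x3 x4 : X}
    (D : QData T x1 x2 x3 x4) (D' : QData T' x1 x2 x3 x4) : PhyloIso T T' := by
  have e21 : T.ι x2 ≠ T.ι x1 := fun h => D.hx12 (T.inj h).symm
  have e31 : T.ι x3 ≠ T.ι x1 := fun h => D.hx13 (T.inj h).symm
  have e32 : T.ι x3 ≠ T.ι x2 := fun h => D.hx23 (T.inj h).symm
  have e41 : T.ι x4 ≠ T.ι x1 := fun h => D.hx14 (T.inj h).symm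
  have e42 : T.ι x4 ≠ T.ι x2 := fun h => D.hx24 (T.inj h).symm
  have e43 : T.ι x4 ≠ T.ι x3 := fun h => D.hx34 (T.inj h).symm
  have e21' : T'.ι x2 ≠ T'.ι x1 := fun h => D'.hx12 (T'.inj h).symm
  have e31' : T'.ι x3 ≠ T'.ι x1 := fun h => D'.hx13 (T'.inj h).symm
  have e32' : T'.ι x3 ≠ T'.ι x2 := fun h => D'.hx23 (T'.inj h).symm
  have e41' : T'.ι x4 ≠ T'.ι x1 := fun h => D'.hx14 (T'.inj h).symm
  have e42' : T'.ι x4 ≠ T'.ι x2 := fun h => D'.hx24 (T'.inj h).symm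
  have e43' : T'.ι x4 ≠ T'.ι x3 := fun h => D'.hx34 (T'.inj h).symm
  set φ : T.V → T'.V := pt6 (T.ι x1) (T.ι x2) (T.ι x3) (T.ι x4) D.u
    (T'.ι x1) (T'.ι x2) (T'.ι x3) (T'.ι x4) D'.u D'.v with hφ
  set ψ : T'.V → T.V := pt6 (T'.ι x1) (T'.ι x2) (T'.ι x3) (T'.ι x4) D'.u
    (T.ι x1) (T.ι x2) (T.ι x3) (T.ι x4) D.u D.v with hψ
  have hφ1 : φ (T.ι x1) = T'.ι x1 := pt6_1 _ _ _ _ _ _ _ _ _ _ _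
  have hφ2 : φ (T.ι x2) = T'.ι x2 := pt6_2 _ _ _ _ _ _ _ _ _ _ _ e21
  have hφ3 : φ (T.ι x3) = T'.ι x3 := pt6_3 _ _ _ _ _ _ _ _ _ _ _ e31 e32
  have hφ4 : φ (T.ι x4) = T'.ι x4 := pt6_4 _ _ _ _ _ _ _ _ _ _ _ e41 e42 e43
  have hφu : φ D.u = D'.u := pt6_5 _ _ _ _ _ _ _ _ _ _ _
    (D.u_ne_ι x1) (D.u_ne_ι x2) (D.u_ne_ι x3) (D.u_ne_ι x4)
  have hφv : φ D.v = D'.v := pt6_6 _ _ _ _ _ _ _ _ _ _ _ _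
    (D.v_ne_ι x1) (D.v_ne_ι x2) (D.v_ne_ι x3) (D.v_ne_ι x4) D.v_ne_u
  have hψ1 : ψ (T'.ι x1) = T.ι x1 := pt6_1 _ _ _ _ _ _ _ _ _ _ _
  have hψ2 : ψ (T'.ι x2) = T.ι x2 := pt6_2 _ _ _ _ _ _ _ _ _ _ _ e21'
  have hψ3 : ψ (T'.ι x3) = T.ι x3 := pt6_3 _ _ _ _ _ _ _ _ _ _ _ e31' e32'
  have hψ4 : ψ (T'.ι x4) = T.ι x4 := pt6_4 _ _ _ _ _ _ _ _ _ _ _ e41' e42' e43'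
  have hψu : ψ D'.u = D.u := pt6_5 _ _ _ _ _ _ _ _ _ _ _
    (D'.u_ne_ι x1) (D'.u_ne_ι x2) (D'.u_ne_ι x3) (D'.u_ne_ι x4)
  have hψv : ψ D'.v = D.v := pt6_6 _ _ _ _ _ _ _ _ _ _ _ _
    (D'.v_ne_ι x1) (D'.v_ne_ι x2) (D'.v_ne_ι x3) (D'.v_ne_ι x4) D'.v_ne_u
  have hli : Function.LeftInverse ψ φ := by
    intro w
    rcases D.enum w with rfl | rfl | rfl | rfl | rfl | rfl
    · rw [hφ1, hψ1]
    · rw [hφ2, hψ2]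
    · rw [hφ3, hψ3]
    · rw [hφ4, hψ4]
    · rw [hφu, hψu]
    · rw [hφv, hψv]
  have hri : Function.RightInverse ψ φ := by
    intro w
    rcases D'.enum w with rfl | rfl | rfl | rfl | rfl | rfl
    · rw [hψ1, hφ1]
    · rw [hψ2, hφ2]
    · rw [hψ3, hφ3]
    · rw [hψ4, hφ4]
    · rw [hψu, hφu]
    · rw [hψv, hφv]
  refine ⟨⟨⟨φ, ψ, hli, hri⟩, ?_⟩, ?_⟩
  · intro a b
    show T'.G.Adj (φ a) (φ b) ↔ T.G.Adj a b
    rcases D.enum a with rfl | rfl | rfl | rfl | rfl | rfl <;>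
      rcases D.enum b with rfl | rfl | rfl | rfl | rfl | rfl <;>
      simp only [hφ1, hφ2, hφ3, hφ4, hφu, hφv] <;>
      simp [D.adj_ι1_iff, D.adj_ι2_iff, D.adj_ι3_iff, D.adj_ι4_iff, D.adj_u_iff,
        D.adj_v_iff, D'.adj_ι1_iff, D'.adj_ι2_iff, D'.adj_ι3_iff, D'.adj_ι4_iff,
        D'.adj_u_iff, D'.adj_v_iff, D.ι_ne_u, D.ι_ne_v, D.u_ne_ι, D.v_ne_ι, D.u_ne_v,
        D.v_ne_u, D'.ι_ne_u, D'.ι_ne_v, D'.u_ne_ι, D'.v_ne_ι, D'.u_ne_v, D'.v_ne_u,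
        e21, e31, e32, e41, e42, e43, e21', e31', e32', e41', e42', e43',
        T.inj.eq_iff, T'.inj.eq_iff, D.hx12, D.hx13, D.hx14, D.hx23, D.hx24, D.hx34,
        Ne.symm D.hx12, Ne.symm D.hx13, Ne.symm D.hx14, Ne.symm D.hx23,
        Ne.symm D.hx24, Ne.symm D.hx34]
  · intro x
    show φ (T.ι x) = T'.ι x
    rcases D.hall x with rfl | rfl | rfl | rfl
    exacts [hφ1, hφ2, hφ3, hφ4]

end BenAux
namespace BenAux
open SimpleGraph

/-- Change-edge count on the caterpillar `((x1,x2),x3,(x4,x5))` with leaf states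
`v1..v5` and internal states `s t r` (at `a c b`). -/
def c5cnt (v1 v2 v3 v4 v5 s t r : Fin 2) : ℕ :=
  (if v1 = s then 0 else 1) + ((if v2 = s then 0 else 1) + ((if s = t then 0 else 1) +
    ((if v3 = t then 0 else 1) + ((if t = r then 0 else 1) + ((if v4 = r then 0 else 1) +
    (if v5 = r then 0 else 1))))))

/-- Parsimony score on the caterpillar `((x1,x2),x3,(x4,x5))`. -/
def c5sc (v1 v2 v3 v4 v5 : Fin 2) : ℕ :=
  min (min (min (c5cnt v1 v2 v3 v4 v5 0 0 0) (c5cnt v1 v2 v3 v4 v5 0 0 1))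
    (min (c5cnt v1 v2 v3 v4 v5 0 1 0) (c5cnt v1 v2 v3 v4 v5 0 1 1)))
    (min (min (c5cnt v1 v2 v3 v4 v5 1 0 0) (c5cnt v1 v2 v3 v4 v5 1 0 1))
    (min (c5cnt v1 v2 v3 v4 v5 1 1 0) (c5cnt v1 v2 v3 v4 v5 1 1 1)))

lemma c5sc_le (v1 v2 v3 v4 v5 s t r : Fin 2) :
    c5sc v1 v2 v3 v4 v5 ≤ c5cnt v1 v2 v3 v4 v5 s t r := by
  revert v1 v2 v3 v4 v5 s t r; decide

/-- Data of a caterpillar tree `((x1,x2),x3,(x4,x5))`. -/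
structure C5Data {X : Type} (T : PhyloTree X) (x1 x2 x3 x4 x5 : X) where
  a : T.V
  c : T.V
  b : T.V
  h1 : T.G.Adj (T.ι x1) a
  h2 : T.G.Adj (T.ι x2) a
  hac : T.G.Adj a c
  h3 : T.G.Adj (T.ι x3) c
  hcb : T.G.Adj c b
  h4 : T.G.Adj (T.ι x4) b
  h5 : T.G.Adj (T.ι x5) b
  hx12 : x1 ≠ x2
  hx13 : x1 ≠ x3
  hx14 : x1 ≠ x4
  hx15 : x1 ≠ x5
  hx23 : x2 ≠ x3
  hx24 : x2 ≠ x4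
  hx25 : x2 ≠ x5
  hx34 : x3 ≠ x4
  hx35 : x3 ≠ x5
  hx45 : x4 ≠ x5
  hall : ∀ x, x = x1 ∨ x = x2 ∨ x = x3 ∨ x = x4 ∨ x = x5

namespace C5Data

variable {X : Type} {T : PhyloTree X} {x1 x2 x3 x4 x5 : X} (D : C5Data T x1 x2 x3 x4 x5)

lemma a_not_leaf : D.a ∉ Set.range T.ι :=
  not_leaf T D.a _ _ (fun h => D.hx12 (T.inj h)) D.h1.symm D.h2.symm

lemma b_not_leaf : D.b ∉ Set.range T.ι :=
  not_leaf T D.b _ _ (fun h => D.hx45 (T.inj h)) D.h4.symm D.h5.symm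

lemma ι_ne_a (x : X) : T.ι x ≠ D.a := fun h => D.a_not_leaf ⟨x, h⟩
lemma ι_ne_b (x : X) : T.ι x ≠ D.b := fun h => D.b_not_leaf ⟨x, h⟩
lemma a_ne_ι (x : X) : D.a ≠ T.ι x := (D.ι_ne_a x).symm
lemma b_ne_ι (x : X) : D.b ≠ T.ι x := (D.ι_ne_b x).symm

lemma c_not_leaf : D.c ∉ Set.range T.ι :=
  not_leaf T D.c _ _ (D.a_ne_ι x3) D.hac.symm D.h3.symm

lemma ι_ne_c (x : X) : T.ι x ≠ D.c := fun h => D.c_not_leaf ⟨x, h⟩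
lemma c_ne_ι (x : X) : D.c ≠ T.ι x := (D.ι_ne_c x).symm

lemma a_ne_c : D.a ≠ D.c := D.hac.ne
lemma c_ne_a : D.c ≠ D.a := D.hac.ne'
lemma c_ne_b : D.c ≠ D.b := D.hcb.ne
lemma b_ne_c : D.b ≠ D.c := D.hcb.ne'

lemma a_ne_b : D.a ≠ D.b := by
  intro h
  have e12 : T.ι x1 ≠ T.ι x2 := fun h' => D.hx12 (T.inj h')
  have e14 : T.ι x1 ≠ T.ι x4 := fun h' => D.hx14 (T.inj h')
  have e15 : T.ι x1 ≠ T.ι x5 := fun h' => D.hx15 (T.inj h')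
  have e24 : T.ι x2 ≠ T.ι x4 := fun h' => D.hx24 (T.inj h')
  have e25 : T.ι x2 ≠ T.ι x5 := fun h' => D.hx25 (T.inj h')
  have e45 : T.ι x4 ≠ T.ι x5 := fun h' => D.hx45 (T.inj h')
  have hsub : ({T.ι x1, T.ι x2, D.c, T.ι x4, T.ι x5} : Set T.V) ⊆
      T.G.neighborSet D.a := by
    rintro y (rfl | rfl | rfl | rfl | rfl)
    · exact D.h1.symm
    · exact D.h2.symm
    · exact D.hac
    · exact h ▸ D.h4.symm
    · exact h ▸ D.h5.symm
  have hle := Set.ncard_le_ncard hsub (nbr_finite T D.a)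
  rw [T.innerDeg D.a D.a_not_leaf] at hle
  rw [Set.ncard_insert_of_notMem (by simp [e12, D.ι_ne_c, e14, e15]),
    Set.ncard_insert_of_notMem (by simp [D.ι_ne_c, e24, e25]),
    Set.ncard_insert_of_notMem (by simp [D.c_ne_ι]),
    Set.ncard_pair e45] at hle
  omega

lemma b_ne_a : D.b ≠ D.a := D.a_ne_b.symm

lemma nbhd_a : T.G.neighborSet D.a = {T.ι x1, T.ι x2, D.c} :=
  internal_nbhd T D.a _ _ _ (fun h => D.hx12 (T.inj h)) (D.ι_ne_c x1) (D.ι_ne_c x2)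
    D.h1.symm D.h2.symm D.hac

lemma nbhd_c : T.G.neighborSet D.c = {T.ι x3, D.a, D.b} :=
  internal_nbhd T D.c _ _ _ (D.ι_ne_a x3) (D.ι_ne_b x3) D.a_ne_b
    D.h3.symm D.hac.symm D.hcb

lemma nbhd_b : T.G.neighborSet D.b = {T.ι x4, T.ι x5, D.c} :=
  internal_nbhd T D.b _ _ _ (fun h => D.hx45 (T.inj h)) (D.ι_ne_c x4) (D.ι_ne_c x5)
    D.h4.symm D.h5.symm D.hcb.symm

lemma enum (w : T.V) : w = T.ι x1 ∨ w = T.ι x2 ∨ w = T.ι x3 ∨ w = T.ι x4 ∨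
    w = T.ι x5 ∨ w = D.a ∨ w = D.c ∨ w = D.b := by
  have hcl : ∀ p ∈ ({T.ι x1, T.ι x2, T.ι x3, T.ι x4, T.ι x5, D.a, D.c, D.b} : Set T.V),
      ∀ q, T.G.Adj p q →
      q ∈ ({T.ι x1, T.ι x2, T.ι x3, T.ι x4, T.ι x5, D.a, D.c, D.b} : Set T.V) := by
    rintro p (rfl | rfl | rfl | rfl | rfl | rfl | rfl | rfl) q hq
    · have hm : q ∈ T.G.neighborSet (T.ι x1) := hq
      rw [leaf_nbhd T x1 D.a D.h1] at hm
      rcases hm with rfl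
      simp
    · have hm : q ∈ T.G.neighborSet (T.ι x2) := hq
      rw [leaf_nbhd T x2 D.a D.h2] at hm
      rcases hm with rfl
      simp
    · have hm : q ∈ T.G.neighborSet (T.ι x3) := hq
      rw [leaf_nbhd T x3 D.c D.h3] at hm
      rcases hm with rfl
      simp
    · have hm : q ∈ T.G.neighborSet (T.ι x4) := hq
      rw [leaf_nbhd T x4 D.b D.h4] at hm
      rcases hm with rfl
      simp
    · have hm : q ∈ T.G.neighborSet (T.ι x5) := hq
      rw [leaf_nbhd T x5 D.b D.h5] at hm
      rcases hm with rfl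
      simp
    · have hm : q ∈ T.G.neighborSet D.a := hq
      rw [D.nbhd_a] at hm
      rcases hm with rfl | rfl | rfl <;> simp
    · have hm : q ∈ T.G.neighborSet D.c := hq
      rw [D.nbhd_c] at hm
      rcases hm with rfl | rfl | rfl <;> simp
    · have hm : q ∈ T.G.neighborSet D.b := hq
      rw [D.nbhd_b] at hm
      rcases hm with rfl | rfl | rfl <;> simp
  have := eq_univ_of_closed T _ _ (Set.mem_insert _ _) hcl w
  simpa using this

lemma edge_enum : T.G.edgeSet = {s(T.ι x1, D.a), s(T.ι x2, D.a), s(D.a, D.c),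
    s(T.ι x3, D.c), s(D.c, D.b), s(T.ι x4, D.b), s(T.ι x5, D.b)} := by
  ext e
  induction e with
  | h p q =>
    constructor
    · intro he
      have hab : T.G.Adj p q := he
      have hbn : q ∈ T.G.neighborSet p := hab
      rcases D.enum p with rfl | rfl | rfl | rfl | rfl | rfl | rfl | rfl
      · rw [leaf_nbhd T x1 D.a D.h1] at hbn
        rcases hbn with rfl
        simp
      · rw [leaf_nbhd T x2 D.a D.h2] at hbn
        rcases hbn with rfl
        simp
      · rw [leaf_nbhd T x3 D.c D.h3] at hbn
        rcases hbn with rfl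
        simp [Sym2.eq_iff]
      · rw [leaf_nbhd T x4 D.b D.h4] at hbn
        rcases hbn with rfl
        simp [Sym2.eq_iff]
      · rw [leaf_nbhd T x5 D.b D.h5] at hbn
        rcases hbn with rfl
        simp [Sym2.eq_iff]
      · rw [D.nbhd_a] at hbn
        rcases hbn with rfl | rfl | rfl <;> simp [Sym2.eq_iff]
      · rw [D.nbhd_c] at hbn
        rcases hbn with rfl | rfl | rfl <;> simp [Sym2.eq_iff]
      · rw [D.nbhd_b] at hbn
        rcases hbn with rfl | rfl | rfl <;> simp [Sym2.eq_iff]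
    · intro he
      simp only [Set.mem_insert_iff, Set.mem_singleton_iff, Sym2.eq_iff] at he
      rcases he with (⟨rfl, rfl⟩ | ⟨rfl, rfl⟩) | (⟨rfl, rfl⟩ | ⟨rfl, rfl⟩) |
        (⟨rfl, rfl⟩ | ⟨rfl, rfl⟩) | (⟨rfl, rfl⟩ | ⟨rfl, rfl⟩) | (⟨rfl, rfl⟩ | ⟨rfl, rfl⟩) |
        (⟨rfl, rfl⟩ | ⟨rfl, rfl⟩) | (⟨rfl, rfl⟩ | ⟨rfl, rfl⟩) <;>
        first
          | exact D.h1 | exact D.h1.symm | exact D.h2 | exact D.h2.symm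
          | exact D.hac | exact D.hac.symm | exact D.h3 | exact D.h3.symm
          | exact D.hcb | exact D.hcb.symm | exact D.h4 | exact D.h4.symm
          | exact D.h5 | exact D.h5.symm

lemma changed (g : T.V → Fin 2) :
    changedEdges T.G g = c5cnt (g (T.ι x1)) (g (T.ι x2)) (g (T.ι x3)) (g (T.ι x4))
      (g (T.ι x5)) (g D.a) (g D.c) (g D.b) := by
  classical
  have e12 : T.ι x1 ≠ T.ι x2 := fun h => D.hx12 (T.inj h)
  have e13 : T.ι x1 ≠ T.ι x3 := fun h => D.hx13 (T.inj h)
  have e14 : T.ι x1 ≠ T.ι x4 := fun h => D.hx14 (T.inj h)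
  have e15 : T.ι x1 ≠ T.ι x5 := fun h => D.hx15 (T.inj h)
  have e23 : T.ι x2 ≠ T.ι x3 := fun h => D.hx23 (T.inj h)
  have e24 : T.ι x2 ≠ T.ι x4 := fun h => D.hx24 (T.inj h)
  have e25 : T.ι x2 ≠ T.ι x5 := fun h => D.hx25 (T.inj h)
  have e34 : T.ι x3 ≠ T.ι x4 := fun h => D.hx34 (T.inj h)
  have e35 : T.ι x3 ≠ T.ι x5 := fun h => D.hx35 (T.inj h)
  have e45 : T.ι x4 ≠ T.ι x5 := fun h => D.hx45 (T.inj h)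
  have hE : T.G.edgeSet = (↑({s(T.ι x1, D.a), s(T.ι x2, D.a), s(D.a, D.c),
      s(T.ι x3, D.c), s(D.c, D.b), s(T.ι x4, D.b), s(T.ι x5, D.b)} :
      Finset (Sym2 T.V)) : Set (Sym2 T.V)) := by
    rw [D.edge_enum]; simp
  unfold changedEdges
  rw [hE, ncard_sep_finset, Finset.card_filter]
  rw [Finset.sum_insert (by
      simp [Sym2.eq_iff, e12, e13, e14, e15, D.ι_ne_a, D.ι_ne_c, D.ι_ne_b, D.a_ne_c,
        D.a_ne_b, D.a_ne_ι]),
    Finset.sum_insert (by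
      simp [Sym2.eq_iff, e23, e24, e25, D.ι_ne_a, D.ι_ne_c, D.ι_ne_b, D.a_ne_c,
        D.a_ne_b, D.a_ne_ι]),
    Finset.sum_insert (by
      simp [Sym2.eq_iff, D.a_ne_ι, D.c_ne_ι, D.a_ne_c, D.a_ne_b, D.c_ne_b, D.c_ne_a]),
    Finset.sum_insert (by
      simp [Sym2.eq_iff, e34, e35, D.ι_ne_c, D.ι_ne_b, D.c_ne_b, D.c_ne_ι]),
    Finset.sum_insert (by
      simp [Sym2.eq_iff, D.c_ne_ι, D.b_ne_ι, D.c_ne_b, D.b_ne_c]),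
    Finset.sum_insert (by simp [Sym2.eq_iff, e45, D.ι_ne_b]),
    Finset.sum_singleton]
  simp [c5cnt, Sym2.map_pair_eq, Sym2.mk_isDiag_iff, ite_not]

include D in
lemma score (f : X → Fin 2) :
    T.score f = c5sc (f x1) (f x2) (f x3) (f x4) (f x5) := by
  classical
  have e21 : T.ι x2 ≠ T.ι x1 := fun h => D.hx12 (T.inj h).symm
  have e31 : T.ι x3 ≠ T.ι x1 := fun h => D.hx13 (T.inj h).symm
  have e32 : T.ι x3 ≠ T.ι x2 := fun h => D.hx23 (T.inj h).symm
  have e41 : T.ι x4 ≠ T.ι x1 := fun h => D.hx14 (T.inj h).symm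
  have e42 : T.ι x4 ≠ T.ι x2 := fun h => D.hx24 (T.inj h).symm
  have e43 : T.ι x4 ≠ T.ι x3 := fun h => D.hx34 (T.inj h).symm
  have e51 : T.ι x5 ≠ T.ι x1 := fun h => D.hx15 (T.inj h).symm
  have e52 : T.ι x5 ≠ T.ι x2 := fun h => D.hx25 (T.inj h).symm
  have e53 : T.ι x5 ≠ T.ι x3 := fun h => D.hx35 (T.inj h).symm
  have e54 : T.ι x5 ≠ T.ι x4 := fun h => D.hx45 (T.inj h).symm
  have hg : ∀ s t r : Fin 2, ∃ g : T.V → Fin 2, (∀ x, g (T.ι x) = f x) ∧ g D.a = s ∧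
      g D.c = t ∧ g D.b = r := by
    intro s t r
    refine ⟨fun w => if w = D.a then s else if w = D.c then t else if w = D.b then r
      else if w = T.ι x1 then f x1 else if w = T.ι x2 then f x2 else if w = T.ι x3 then f x3
      else if w = T.ι x4 then f x4 else f x5, ?_, ?_, ?_, ?_⟩
    · intro x
      rcases D.hall x with rfl | rfl | rfl | rfl | rfl <;>
        simp [D.ι_ne_a, D.ι_ne_c, D.ι_ne_b, e21, e31, e32, e41, e42, e43, e51, e52,
          e53, e54]
    · simp
    · simp [D.c_ne_a]
    · simp [D.b_ne_a, D.b_ne_c]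
  have key : ∀ g : T.V → Fin 2, (∀ x, g (T.ι x) = f x) →
      changedEdges T.G g = c5cnt (f x1) (f x2) (f x3) (f x4) (f x5) (g D.a) (g D.c)
        (g D.b) := by
    intro g hgx
    rw [D.changed g, hgx x1, hgx x2, hgx x3, hgx x4, hgx x5]
  show gScore T.G T.ι f = _
  unfold gScore
  apply le_antisymm
  · have hle : ∀ s t r : Fin 2, sInf {n | ∃ g : T.V → Fin 2, (∀ x, g (T.ι x) = f x) ∧
        n = changedEdges T.G g} ≤ c5cnt (f x1) (f x2) (f x3) (f x4) (f x5) s t r := by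
      intro s t r
      obtain ⟨g, hgx, ha, hc, hb⟩ := hg s t r
      apply Nat.sInf_le
      exact ⟨g, hgx, by rw [key g hgx, ha, hc, hb]⟩
    exact le_min (le_min (le_min (hle 0 0 0) (hle 0 0 1)) (le_min (hle 0 1 0) (hle 0 1 1)))
      (le_min (le_min (hle 1 0 0) (hle 1 0 1)) (le_min (hle 1 1 0) (hle 1 1 1)))
  · apply le_csInf
    · obtain ⟨g, hgx, -, -, -⟩ := hg 0 0 0
      exact ⟨changedEdges T.G g, g, hgx, rfl⟩
    · rintro n ⟨g, hgx, rfl⟩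
      rw [key g hgx]
      exact c5sc_le _ _ _ _ _ _ _ _

include D in
lemma scoreA (S : List (X → Fin 2)) :
    T.scoreA S = (S.map (fun f => c5sc (f x1) (f x2) (f x3) (f x4) (f x5))).sum := by
  show (S.map (gScore T.G T.ι)).sum = _
  congr 1
  exact List.map_congr_left (fun f _ => D.score f)

end C5Data
end BenAux
namespace BenAux
open SimpleGraph

lemma unique_mp_of {Y : Type} {T : PhyloTree Y} {y1 y2 y3 y4 : Y}
    (D : QData T y1 y2 y3 y4) (S : List (Y → Fin 2)) (n0 n1 n2 : ℕ)
    (h0 : (S.map (fun f => qsc (f y1) (f y2) (f y3) (f y4))).sum = n0)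
    (h1 : (S.map (fun f => qsc (f y1) (f y3) (f y2) (f y4))).sum = n1)
    (h2 : (S.map (fun f => qsc (f y1) (f y4) (f y2) (f y3))).sum = n2)
    (hlt1 : n0 < n1) (hlt2 : n0 < n2) :
    T.IsUniqueMP S := by
  have hsc : T.scoreA S = n0 := by rw [D.scoreA, h0]
  constructor
  · intro T'
    rcases classify T' y1 y2 y3 y4 D.hx12 D.hx13 D.hx14 D.hx23 D.hx24 D.hx34 D.hall with
      hD | hD | hD <;> obtain ⟨D'⟩ := hD
    · rw [hsc, D'.scoreA, h0]
    · rw [hsc, D'.scoreA, h1]; exact hlt1.le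
    · rw [hsc, D'.scoreA, h2]; exact hlt2.le
  · intro T' hni
    rcases classify T' y1 y2 y3 y4 D.hx12 D.hx13 D.hx14 D.hx23 D.hx24 D.hx34 D.hall with
      hD | hD | hD <;> obtain ⟨D'⟩ := hD
    · exact absurd (iso_of_qdata D D') hni
    · rw [hsc, D'.scoreA, h1]; exact hlt1
    · rw [hsc, D'.scoreA, h2]; exact hlt2

namespace C5Data

variable {X : Type} {T : PhyloTree X} {x1 x2 x3 x4 x5 : X} (D : C5Data T x1 x2 x3 x4 x5)

include D in
lemma split_jk_lm : T.Split x2 x3 x4 x5 := by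
  have e23 : T.ι x2 ≠ T.ι x3 := fun h => D.hx23 (T.inj h)
  have e45 : T.ι x4 ≠ T.ι x5 := fun h => D.hx45 (T.inj h)
  refine ⟨SimpleGraph.Walk.cons D.h2 (SimpleGraph.Walk.cons D.hac
      (SimpleGraph.Walk.cons D.h3.symm SimpleGraph.Walk.nil)),
    SimpleGraph.Walk.cons D.h4 (SimpleGraph.Walk.cons D.h5.symm SimpleGraph.Walk.nil),
    ?_, ?_, ?_⟩
  · simp [SimpleGraph.Walk.isPath_def, D.ι_ne_a, D.ι_ne_c, D.ι_ne_b, D.a_ne_ι, D.c_ne_ι, D.b_ne_ι, D.a_ne_c, D.c_ne_a, D.a_ne_b, D.b_ne_a, D.c_ne_b, D.b_ne_c, D.ι_ne_a, D.ι_ne_c, e23, D.a_ne_c, D.a_ne_ι]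
  · simp [SimpleGraph.Walk.isPath_def, D.ι_ne_a, D.ι_ne_c, D.ι_ne_b, D.a_ne_ι, D.c_ne_ι, D.b_ne_ι, D.a_ne_c, D.c_ne_a, D.a_ne_b, D.b_ne_a, D.c_ne_b, D.b_ne_c, D.ι_ne_b, e45, D.b_ne_ι]
  · intro v hv
    simp only [SimpleGraph.Walk.support_cons, SimpleGraph.Walk.support_nil,
      List.mem_cons, List.mem_singleton, List.not_mem_nil, or_false] at hv ⊢
    have e24 : T.ι x2 ≠ T.ι x4 := fun h => D.hx24 (T.inj h)
    have e25 : T.ι x2 ≠ T.ι x5 := fun h => D.hx25 (T.inj h)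
    have e34 : T.ι x3 ≠ T.ι x4 := fun h => D.hx34 (T.inj h)
    have e35 : T.ι x3 ≠ T.ι x5 := fun h => D.hx35 (T.inj h)
    rcases hv with rfl | rfl | rfl | rfl <;>
      simp [e24, e25, e34, e35, D.ι_ne_b, D.a_ne_ι, D.a_ne_b, D.c_ne_ι, D.c_ne_b]

include D in
lemma split_ik_lm : T.Split x1 x3 x4 x5 := by
  have e13 : T.ι x1 ≠ T.ι x3 := fun h => D.hx13 (T.inj h)
  have e45 : T.ι x4 ≠ T.ι x5 := fun h => D.hx45 (T.inj h)
  refine ⟨SimpleGraph.Walk.cons D.h1 (SimpleGraph.Walk.cons D.hac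
      (SimpleGraph.Walk.cons D.h3.symm SimpleGraph.Walk.nil)),
    SimpleGraph.Walk.cons D.h4 (SimpleGraph.Walk.cons D.h5.symm SimpleGraph.Walk.nil),
    ?_, ?_, ?_⟩
  · simp [SimpleGraph.Walk.isPath_def, D.ι_ne_a, D.ι_ne_c, D.ι_ne_b, D.a_ne_ι, D.c_ne_ι, D.b_ne_ι, D.a_ne_c, D.c_ne_a, D.a_ne_b, D.b_ne_a, D.c_ne_b, D.b_ne_c, D.ι_ne_a, D.ι_ne_c, e13, D.a_ne_c, D.a_ne_ι]
  · simp [SimpleGraph.Walk.isPath_def, D.ι_ne_a, D.ι_ne_c, D.ι_ne_b, D.a_ne_ι, D.c_ne_ι, D.b_ne_ι, D.a_ne_c, D.c_ne_a, D.a_ne_b, D.b_ne_a, D.c_ne_b, D.b_ne_c, D.ι_ne_b, e45, D.b_ne_ι]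
  · intro v hv
    simp only [SimpleGraph.Walk.support_cons, SimpleGraph.Walk.support_nil,
      List.mem_cons, List.mem_singleton, List.not_mem_nil, or_false] at hv ⊢
    have e14 : T.ι x1 ≠ T.ι x4 := fun h => D.hx14 (T.inj h)
    have e15 : T.ι x1 ≠ T.ι x5 := fun h => D.hx15 (T.inj h)
    have e34 : T.ι x3 ≠ T.ι x4 := fun h => D.hx34 (T.inj h)
    have e35 : T.ι x3 ≠ T.ι x5 := fun h => D.hx35 (T.inj h)
    rcases hv with rfl | rfl | rfl | rfl <;>
      simp [e14, e15, e34, e35, D.ι_ne_b, D.a_ne_ι, D.a_ne_b, D.c_ne_ι, D.c_ne_b]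

include D in
lemma split_ij_lm : T.Split x1 x2 x4 x5 := by
  have e12 : T.ι x1 ≠ T.ι x2 := fun h => D.hx12 (T.inj h)
  have e45 : T.ι x4 ≠ T.ι x5 := fun h => D.hx45 (T.inj h)
  refine ⟨SimpleGraph.Walk.cons D.h1 (SimpleGraph.Walk.cons D.h2.symm SimpleGraph.Walk.nil),
    SimpleGraph.Walk.cons D.h4 (SimpleGraph.Walk.cons D.h5.symm SimpleGraph.Walk.nil),
    ?_, ?_, ?_⟩
  · simp [SimpleGraph.Walk.isPath_def, D.ι_ne_a, D.ι_ne_c, D.ι_ne_b, D.a_ne_ι, D.c_ne_ι, D.b_ne_ι, D.a_ne_c, D.c_ne_a, D.a_ne_b, D.b_ne_a, D.c_ne_b, D.b_ne_c, D.ι_ne_a, e12, D.a_ne_ι]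
  · simp [SimpleGraph.Walk.isPath_def, D.ι_ne_a, D.ι_ne_c, D.ι_ne_b, D.a_ne_ι, D.c_ne_ι, D.b_ne_ι, D.a_ne_c, D.c_ne_a, D.a_ne_b, D.b_ne_a, D.c_ne_b, D.b_ne_c, D.ι_ne_b, e45, D.b_ne_ι]
  · intro v hv
    simp only [SimpleGraph.Walk.support_cons, SimpleGraph.Walk.support_nil,
      List.mem_cons, List.mem_singleton, List.not_mem_nil, or_false] at hv ⊢
    have e14 : T.ι x1 ≠ T.ι x4 := fun h => D.hx14 (T.inj h)
    have e15 : T.ι x1 ≠ T.ι x5 := fun h => D.hx15 (T.inj h)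
    have e24 : T.ι x2 ≠ T.ι x4 := fun h => D.hx24 (T.inj h)
    have e25 : T.ι x2 ≠ T.ι x5 := fun h => D.hx25 (T.inj h)
    rcases hv with rfl | rfl | rfl <;>
      simp [e14, e15, e24, e25, D.ι_ne_b, D.a_ne_ι, D.a_ne_b]

include D in
lemma split_ij_km : T.Split x1 x2 x3 x5 := by
  have e12 : T.ι x1 ≠ T.ι x2 := fun h => D.hx12 (T.inj h)
  have e35 : T.ι x3 ≠ T.ι x5 := fun h => D.hx35 (T.inj h)
  refine ⟨SimpleGraph.Walk.cons D.h1 (SimpleGraph.Walk.cons D.h2.symm SimpleGraph.Walk.nil),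
    SimpleGraph.Walk.cons D.h3 (SimpleGraph.Walk.cons D.hcb
      (SimpleGraph.Walk.cons D.h5.symm SimpleGraph.Walk.nil)),
    ?_, ?_, ?_⟩
  · simp [SimpleGraph.Walk.isPath_def, D.ι_ne_a, D.ι_ne_c, D.ι_ne_b, D.a_ne_ι, D.c_ne_ι, D.b_ne_ι, D.a_ne_c, D.c_ne_a, D.a_ne_b, D.b_ne_a, D.c_ne_b, D.b_ne_c, D.ι_ne_a, e12, D.a_ne_ι]
  · simp [SimpleGraph.Walk.isPath_def, D.ι_ne_a, D.ι_ne_c, D.ι_ne_b, D.a_ne_ι, D.c_ne_ι, D.b_ne_ι, D.a_ne_c, D.c_ne_a, D.a_ne_b, D.b_ne_a, D.c_ne_b, D.b_ne_c, D.ι_ne_c, D.ι_ne_b, e35, D.c_ne_b, D.c_ne_ι,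
      D.b_ne_ι]
  · intro v hv
    simp only [SimpleGraph.Walk.support_cons, SimpleGraph.Walk.support_nil,
      List.mem_cons, List.mem_singleton, List.not_mem_nil, or_false] at hv ⊢
    have e13 : T.ι x1 ≠ T.ι x3 := fun h => D.hx13 (T.inj h)
    have e15 : T.ι x1 ≠ T.ι x5 := fun h => D.hx15 (T.inj h)
    have e23 : T.ι x2 ≠ T.ι x3 := fun h => D.hx23 (T.inj h)
    have e25 : T.ι x2 ≠ T.ι x5 := fun h => D.hx25 (T.inj h)
    rcases hv with rfl | rfl | rfl <;>
      simp [e13, e15, e23, e25, D.ι_ne_c, D.ι_ne_b, D.a_ne_ι, D.a_ne_c, D.a_ne_b]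

include D in
lemma split_ij_kl : T.Split x1 x2 x3 x4 := by
  have e12 : T.ι x1 ≠ T.ι x2 := fun h => D.hx12 (T.inj h)
  have e34 : T.ι x3 ≠ T.ι x4 := fun h => D.hx34 (T.inj h)
  refine ⟨SimpleGraph.Walk.cons D.h1 (SimpleGraph.Walk.cons D.h2.symm SimpleGraph.Walk.nil),
    SimpleGraph.Walk.cons D.h3 (SimpleGraph.Walk.cons D.hcb
      (SimpleGraph.Walk.cons D.h4.symm SimpleGraph.Walk.nil)),
    ?_, ?_, ?_⟩
  · simp [SimpleGraph.Walk.isPath_def, D.ι_ne_a, D.ι_ne_c, D.ι_ne_b, D.a_ne_ι, D.c_ne_ι, D.b_ne_ι, D.a_ne_c, D.c_ne_a, D.a_ne_b, D.b_ne_a, D.c_ne_b, D.b_ne_c, D.ι_ne_a, e12, D.a_ne_ι]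
  · simp [SimpleGraph.Walk.isPath_def, D.ι_ne_a, D.ι_ne_c, D.ι_ne_b, D.a_ne_ι, D.c_ne_ι, D.b_ne_ι, D.a_ne_c, D.c_ne_a, D.a_ne_b, D.b_ne_a, D.c_ne_b, D.b_ne_c, D.ι_ne_c, D.ι_ne_b, e34, D.c_ne_b, D.c_ne_ι,
      D.b_ne_ι]
  · intro v hv
    simp only [SimpleGraph.Walk.support_cons, SimpleGraph.Walk.support_nil,
      List.mem_cons, List.mem_singleton, List.not_mem_nil, or_false] at hv ⊢
    have e13 : T.ι x1 ≠ T.ι x3 := fun h => D.hx13 (T.inj h)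
    have e14 : T.ι x1 ≠ T.ι x4 := fun h => D.hx14 (T.inj h)
    have e23 : T.ι x2 ≠ T.ι x3 := fun h => D.hx23 (T.inj h)
    have e24 : T.ι x2 ≠ T.ι x4 := fun h => D.hx24 (T.inj h)
    rcases hv with rfl | rfl | rfl <;>
      simp [e13, e14, e23, e24, D.ι_ne_c, D.ι_ne_b, D.a_ne_ι, D.a_ne_c, D.a_ne_b]

end C5Data
end BenAux

/-- For the alignment `Sben`: the subalignments obtained by deleting
taxon `1, 2, 3, 4, 5` respectively have the unique MP quartet trees `((2,3),(4,5))`,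
`((1,3),(4,5))`, `((1,2),(4,5))`, `((1,2),(3,5))` and `((1,2),(3,4))`; each of these is
compatible with `T̂ = ((1,2),3,(4,5))` (i.e. `T̂` displays the corresponding quartet
split); yet `T̂` is not an MP tree for `Sben`, since `((1,3),2,(4,5))` has strictly
smaller parsimony score. (Taxa `1,…,5` are `0,…,4`.) -/
theorem Sben_quartets_compatible_but_not_MP :
    (∀ Q : PhyloTree ↥{x : Fin 5 | x ≠ 0},
      Q.Cherries ⟨1, by decide⟩ ⟨2, by decide⟩ ⟨3, by decide⟩ ⟨4, by decide⟩ →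
      Q.IsUniqueMP (subAl {x | x ≠ 0} Sben)) ∧
    (∀ Q : PhyloTree ↥{x : Fin 5 | x ≠ 1},
      Q.Cherries ⟨0, by decide⟩ ⟨2, by decide⟩ ⟨3, by decide⟩ ⟨4, by decide⟩ →
      Q.IsUniqueMP (subAl {x | x ≠ 1} Sben)) ∧
    (∀ Q : PhyloTree ↥{x : Fin 5 | x ≠ 2},
      Q.Cherries ⟨0, by decide⟩ ⟨1, by decide⟩ ⟨3, by decide⟩ ⟨4, by decide⟩ →
      Q.IsUniqueMP (subAl {x | x ≠ 2} Sben)) ∧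
    (∀ Q : PhyloTree ↥{x : Fin 5 | x ≠ 3},
      Q.Cherries ⟨0, by decide⟩ ⟨1, by decide⟩ ⟨2, by decide⟩ ⟨4, by decide⟩ →
      Q.IsUniqueMP (subAl {x | x ≠ 3} Sben)) ∧
    (∀ Q : PhyloTree ↥{x : Fin 5 | x ≠ 4},
      Q.Cherries ⟨0, by decide⟩ ⟨1, by decide⟩ ⟨2, by decide⟩ ⟨3, by decide⟩ →
      Q.IsUniqueMP (subAl {x | x ≠ 4} Sben)) ∧
    (∀ That : PhyloTree (Fin 5), That.Cat5 0 1 2 3 4 →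
      (That.Split 1 2 3 4 ∧ That.Split 0 2 3 4 ∧ That.Split 0 1 3 4 ∧
        That.Split 0 1 2 4 ∧ That.Split 0 1 2 3) ∧
      ∀ T' : PhyloTree (Fin 5), T'.Cat5 0 2 1 3 4 →
        T'.scoreA Sben < That.scoreA Sben) := by
  classical
  refine ⟨?_, ?_, ?_, ?_, ?_, ?_⟩
  · intro Q hC
    obtain ⟨u, v, h1, h2, huv, h3, h4⟩ := hC
    have D : BenAux.QData Q ⟨1, by decide⟩ ⟨2, by decide⟩ ⟨3, by decide⟩ ⟨4, by decide⟩ :=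
      ⟨u, v, h1, h2, huv, h3, h4, by decide, by decide, by decide, by decide, by decide,
        by decide, by decide⟩
    exact BenAux.unique_mp_of D _ 21 22 22 (by decide) (by decide) (by decide)
      (by decide) (by decide)
  · intro Q hC
    obtain ⟨u, v, h1, h2, huv, h3, h4⟩ := hC
    have D : BenAux.QData Q ⟨0, by decide⟩ ⟨2, by decide⟩ ⟨3, by decide⟩ ⟨4, by decide⟩ :=
      ⟨u, v, h1, h2, huv, h3, h4, by decide, by decide, by decide, by decide, by decide,
        by decide, by decide⟩
    exact BenAux.unique_mp_of D _ 21 25 25 (by decide) (by decide) (by decide)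
      (by decide) (by decide)
  · intro Q hC
    obtain ⟨u, v, h1, h2, huv, h3, h4⟩ := hC
    have D : BenAux.QData Q ⟨0, by decide⟩ ⟨1, by decide⟩ ⟨3, by decide⟩ ⟨4, by decide⟩ :=
      ⟨u, v, h1, h2, huv, h3, h4, by decide, by decide, by decide, by decide, by decide,
        by decide, by decide⟩
    exact BenAux.unique_mp_of D _ 15 21 21 (by decide) (by decide) (by decide)
      (by decide) (by decide)
  · intro Q hC
    obtain ⟨u, v, h1, h2, huv, h3, h4⟩ := hC
    have D : BenAux.QData Q ⟨0, by decide⟩ ⟨1, by decide⟩ ⟨2, by decide⟩ ⟨4, by decide⟩ :=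
      ⟨u, v, h1, h2, huv, h3, h4, by decide, by decide, by decide, by decide, by decide,
        by decide, by decide⟩
    exact BenAux.unique_mp_of D _ 18 20 23 (by decide) (by decide) (by decide)
      (by decide) (by decide)
  · intro Q hC
    obtain ⟨u, v, h1, h2, huv, h3, h4⟩ := hC
    have D : BenAux.QData Q ⟨0, by decide⟩ ⟨1, by decide⟩ ⟨2, by decide⟩ ⟨3, by decide⟩ :=
      ⟨u, v, h1, h2, huv, h3, h4, by decide, by decide, by decide, by decide, by decide,
        by decide, by decide⟩
    exact BenAux.unique_mp_of D _ 18 20 23 (by decide) (by decide) (by decide)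
      (by decide) (by decide)
  · intro That hC
    obtain ⟨a, c, b, h1, h2, hac, h3, hcb, h4, h5⟩ := hC
    have D : BenAux.C5Data That 0 1 2 3 4 :=
      ⟨a, c, b, h1, h2, hac, h3, hcb, h4, h5, by decide, by decide, by decide, by decide,
        by decide, by decide, by decide, by decide, by decide, by decide, by decide⟩
    refine ⟨⟨D.split_jk_lm, D.split_ik_lm, D.split_ij_lm, D.split_ij_km, D.split_ij_kl⟩, ?_⟩
    intro T' hC'
    obtain ⟨a', c', b', h1', h2', hac', h3', hcb', h4', h5'⟩ := hC'
    have D' : BenAux.C5Data T' 0 2 1 3 4 :=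
      ⟨a', c', b', h1', h2', hac', h3', hcb', h4', h5', by decide, by decide, by decide,
        by decide, by decide, by decide, by decide, by decide, by decide, by decide,
        by decide⟩
    rw [D.scoreA Sben, D'.scoreA Sben]
    decide
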